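/- Capacitated vertex cover with non-uniform unsplittable demands, approximation bound: let ε ≥ 1 and let an ε-tight valid level scheme on G (with demand-based weights) with consistent edge assignment δ be given. Then Σ_{v : δ(v) ≠ ∅} ⌈(Σ_{e ∈ δ(v)} d_e)/k_v⌉·c_v ≤ ε·(2β/(β − 1) + 1)·Σ_{e ∈ E} d_e·μ·β^(−ℓ(e)). -/

import Mathlib

open scoped Classical

/-- `S_v(i)`: the total demand of the edges incident to `v` whose edge level equals `i`,
where the level of an edge is the maximum level of its two endpoints. -/
noncomputable def demLevelSum {V : Type*} [Fintype V] (G : SimpleGraph V)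
    (d : Sym2 V → ℝ) (ℓ : V → ℕ) (v : V) (i : ℕ) : ℝ :=
  ∑ u ∈ Finset.univ.filter (fun u => G.Adj v u ∧ max (ℓ u) (ℓ v) = i), d s(u, v)

/-- The demand-based weight of a vertex `v`: `W_v = Σ_i min{k_v, S_v(i)}·μ·β^(−i)`. -/
noncomputable def demWeight {V : Type*} [Fintype V] (G : SimpleGraph V)
    (d : Sym2 V → ℝ) (β μ : ℝ) (k : V → ℝ) (ℓ : V → ℕ) (v : V) : ℝ :=
  ∑' i : ℕ, min (k v) (demLevelSum G d ℓ v i) * μ * β ^ (-(i : ℤ))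

/-- `Σ_{e ∈ δ(v)} d_e`: the total demand of the edges assigned to `v` by the assignment `A`,
where `A u v` means that the edge `{u, v}` is assigned to its endpoint `v`. -/
noncomputable def assignedDemand {V : Type*} [Fintype V] (G : SimpleGraph V)
    (d : Sym2 V → ℝ) (A : V → V → Prop) (v : V) : ℝ :=
  ∑ u ∈ Finset.univ.filter (fun u => G.Adj v u ∧ A u v), d s(u, v)

/-- The level of an edge: the maximum of the levels of its endpoints. -/
noncomputable def edgeLevel {V : Type*} (ℓ : V → ℕ) : Sym2 V → ℕ :=
  Sym2.lift ⟨fun a b => max (ℓ a) (ℓ b), fun _ _ => max_comm _ _⟩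

/- ### Auxiliary lemmas -/

lemma geom_bound (β : ℝ) (hβ : 1 < β) (L : ℕ) :
    Summable (fun i : ℕ => if i < L then (0:ℝ) else β ^ (-(i:ℤ))) ∧
    ∑' i : ℕ, (if i < L then (0:ℝ) else β ^ (-(i:ℤ))) = β ^ (-(L:ℤ)) * (β / (β - 1)) := by
  have hβ0 : (0:ℝ) < β := lt_trans one_pos hβ
  have hr0 : (0:ℝ) ≤ β⁻¹ := (inv_nonneg).mpr hβ0.le
  have hr1 : β⁻¹ < 1 := inv_lt_one_of_one_lt₀ hβ
  have hzpow : ∀ i : ℕ, β ^ (-(i:ℤ)) = β⁻¹ ^ i := by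
    intro i
    rw [zpow_neg, zpow_natCast, inv_pow]
  have hsum : Summable (fun i : ℕ => if i < L then (0:ℝ) else β ^ (-(i:ℤ))) := by
    refine Summable.of_nonneg_of_le (fun i => ?_) (fun i => ?_)
      (summable_geometric_of_lt_one hr0 hr1)
    · split
      · exact le_rfl
      · exact (zpow_pos hβ0 _).le
    · split
      · positivity
      · rw [hzpow]
  refine ⟨hsum, ?_⟩
  have key := Summable.sum_add_tsum_nat_add (f := fun i : ℕ => if i < L then (0:ℝ) else β ^ (-(i:ℤ))) L hsum
  have h1 : ∑ i ∈ Finset.range L, (if i < L then (0:ℝ) else β ^ (-(i:ℤ))) = 0 :=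
    Finset.sum_eq_zero fun i hi => by simp [Finset.mem_range.mp hi]
  have h2 : ∀ i : ℕ, (fun j : ℕ => if j < L then (0:ℝ) else β ^ (-(j:ℤ))) (i + L)
      = β ^ (-(L:ℤ)) * β⁻¹ ^ i := by
    intro i
    simp only [if_neg (by omega : ¬ i + L < L)]
    push_cast
    rw [neg_add, zpow_add₀ hβ0.ne', hzpow i, mul_comm]
  rw [← key, h1, zero_add, tsum_congr h2, tsum_mul_left,
    tsum_geometric_of_lt_one hr0 hr1]
  have h3 : (1 - β⁻¹) = (β - 1) / β := by field_simp
  rw [h3, inv_div]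

lemma demLevelSum_eq_zero_of_lt {V : Type*} [Fintype V] (G : SimpleGraph V)
    (d : Sym2 V → ℝ) (ℓ : V → ℕ) (v : V) (i : ℕ) (hi : i < ℓ v) :
    demLevelSum G d ℓ v i = 0 := by
  have h : Finset.univ.filter (fun u => G.Adj v u ∧ max (ℓ u) (ℓ v) = i) = ∅ := by
    ext u
    simp only [Finset.mem_filter, Finset.mem_univ, true_and, Finset.notMem_empty, iff_false,
      not_and]
    intro _ h
    exact absurd (h ▸ le_max_right (ℓ u) (ℓ v)) (not_le.mpr hi)
  simp only [demLevelSum, h, Finset.sum_empty]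

section helpers

variable {V : Type*} [Fintype V] (G : SimpleGraph V) (d : Sym2 V → ℝ) (β μ : ℝ)
  (k : V → ℝ) (ℓ : V → ℕ) (v : V)

lemma dW_term_nonneg (hβ : 1 < β) (hμ0 : 0 < μ) (hk : 0 < k v)
    (hS0 : ∀ i, 0 ≤ demLevelSum G d ℓ v i) (i : ℕ) :
    0 ≤ min (k v) (demLevelSum G d ℓ v i) * μ * β ^ (-(i:ℤ)) := by
  have hβ0 : (0:ℝ) < β := lt_trans one_pos hβ
  have := le_min hk.le (hS0 i)
  positivity

lemma dW_term_le (hβ : 1 < β) (hμ0 : 0 < μ) (hk : 0 < k v)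
    (hS0 : ∀ i, 0 ≤ demLevelSum G d ℓ v i) (i : ℕ) :
    min (k v) (demLevelSum G d ℓ v i) * μ * β ^ (-(i:ℤ))
      ≤ (k v * μ) * (if i < ℓ v then (0:ℝ) else β ^ (-(i:ℤ))) := by
  have hβ0 : (0:ℝ) < β := lt_trans one_pos hβ
  by_cases hi : i < ℓ v
  · rw [if_pos hi, demLevelSum_eq_zero_of_lt G d ℓ v i hi, min_eq_right hk.le]
    simp
  · rw [if_neg hi]
    have : min (k v) (demLevelSum G d ℓ v i) * μ ≤ k v * μ :=
      mul_le_mul_of_nonneg_right (min_le_left _ _) hμ0.le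
    exact mul_le_mul_of_nonneg_right this (zpow_pos hβ0 _).le

lemma dW_summable (hβ : 1 < β) (hμ0 : 0 < μ) (hk : 0 < k v)
    (hS0 : ∀ i, 0 ≤ demLevelSum G d ℓ v i) :
    Summable (fun i : ℕ => min (k v) (demLevelSum G d ℓ v i) * μ * β ^ (-(i:ℤ))) :=
  Summable.of_nonneg_of_le (dW_term_nonneg G d β μ k ℓ v hβ hμ0 hk hS0)
    (dW_term_le G d β μ k ℓ v hβ hμ0 hk hS0) (((geom_bound β hβ (ℓ v)).1).mul_left _)

lemma demWeight_le_geom (hβ : 1 < β) (hμ0 : 0 < μ) (hk : 0 < k v)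
    (hS0 : ∀ i, 0 ≤ demLevelSum G d ℓ v i) :
    demWeight G d β μ k ℓ v ≤ k v * μ * (β ^ (-(ℓ v : ℤ)) * (β / (β - 1))) := by
  have h := Summable.tsum_le_tsum (dW_term_le G d β μ k ℓ v hβ hμ0 hk hS0)
    (dW_summable G d β μ k ℓ v hβ hμ0 hk hS0) (((geom_bound β hβ (ℓ v)).1).mul_left _)
  rw [tsum_mul_left, (geom_bound β hβ (ℓ v)).2] at h
  exact h

lemma demWeight_le_edges (hβ : 1 < β) (hμ0 : 0 < μ) (hk : 0 < k v)
    (hd0 : ∀ u, G.Adj v u → 0 ≤ d s(u, v)) :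
    demWeight G d β μ k ℓ v
      ≤ ∑ u ∈ Finset.univ.filter (fun u => G.Adj v u),
          d s(u, v) * (μ * β ^ (-((max (ℓ u) (ℓ v) : ℕ) : ℤ))) := by
  classical
  have hβ0 : (0:ℝ) < β := lt_trans one_pos hβ
  have hS0 : ∀ i, 0 ≤ demLevelSum G d ℓ v i := by
    intro i
    refine Finset.sum_nonneg fun u hu => hd0 u (Finset.mem_filter.mp hu).2.1
  set N : ℕ := Finset.univ.sup ℓ + 1 with hN
  have hSbig : ∀ i : ℕ, i ∉ Finset.range N → demLevelSum G d ℓ v i = 0 := by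
    intro i hi
    rw [Finset.mem_range, not_lt] at hi
    have h : Finset.univ.filter (fun u => G.Adj v u ∧ max (ℓ u) (ℓ v) = i) = ∅ := by
      ext u
      simp only [Finset.mem_filter, Finset.mem_univ, true_and, Finset.notMem_empty, iff_false,
        not_and]
      intro _ h
      have h1 : ℓ u ≤ Finset.univ.sup ℓ := Finset.le_sup (Finset.mem_univ u)
      have h2 : ℓ v ≤ Finset.univ.sup ℓ := Finset.le_sup (Finset.mem_univ v)
      omega
    simp only [demLevelSum, h, Finset.sum_empty]
  have hgvanish : ∀ i : ℕ, i ∉ Finset.range N →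
      demLevelSum G d ℓ v i * μ * β ^ (-(i:ℤ)) = 0 := by
    intro i hi
    rw [hSbig i hi, zero_mul, zero_mul]
  have hgsum : Summable (fun i : ℕ => demLevelSum G d ℓ v i * μ * β ^ (-(i:ℤ))) :=
    summable_of_ne_finset_zero hgvanish
  have h1 : demWeight G d β μ k ℓ v
      ≤ ∑' i : ℕ, demLevelSum G d ℓ v i * μ * β ^ (-(i:ℤ)) := by
    refine Summable.tsum_le_tsum (fun i => ?_) (dW_summable G d β μ k ℓ v hβ hμ0 hk hS0) hgsum
    exact mul_le_mul_of_nonneg_right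
      (mul_le_mul_of_nonneg_right (min_le_right _ _) hμ0.le) (zpow_pos hβ0 _).le
  refine h1.trans (le_of_eq ?_)
  rw [tsum_eq_sum hgvanish]
  have h2 : ∀ i ∈ Finset.range N,
      demLevelSum G d ℓ v i * μ * β ^ (-(i:ℤ))
        = ∑ u ∈ (Finset.univ.filter (fun u => G.Adj v u)).filter
            (fun u => max (ℓ u) (ℓ v) = i),
            d s(u, v) * (μ * β ^ (-((max (ℓ u) (ℓ v) : ℕ) : ℤ))) := by
    intro i _
    rw [demLevelSum, Finset.filter_filter]
    rw [Finset.sum_mul, Finset.sum_mul]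
    refine Finset.sum_congr rfl fun u hu => ?_
    rw [(Finset.mem_filter.mp hu).2.2, mul_assoc]
  rw [Finset.sum_congr rfl h2]
  refine Finset.sum_fiberwise_of_maps_to (fun u _ => ?_) _
  rw [Finset.mem_range]
  have h1 : ℓ u ≤ Finset.univ.sup ℓ := Finset.le_sup (Finset.mem_univ u)
  have h2 : ℓ v ≤ Finset.univ.sup ℓ := Finset.le_sup (Finset.mem_univ v)
  omega

end helpers

lemma sum_adj_pairs {V : Type*} [Fintype V] (G : SimpleGraph V) (P : V → V → Prop)
    (hP : ∀ v u, P v u → G.Adj v u) (F : Sym2 V → ℝ) :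
    ∑ v : V, ∑ u ∈ Finset.univ.filter (fun u => P v u), F s(u, v)
      = ∑ e ∈ G.edgeFinset,
          (((Finset.univ ×ˢ Finset.univ).filter
            (fun p : V × V => P p.1 p.2 ∧ s(p.2, p.1) = e)).card : ℝ) * F e := by
  classical
  have hmap : ∀ p ∈ (Finset.univ ×ˢ Finset.univ).filter (fun p : V × V => P p.1 p.2),
      s(p.2, p.1) ∈ G.edgeFinset := by
    intro p hp
    rw [SimpleGraph.mem_edgeFinset, SimpleGraph.mem_edgeSet]
    exact (hP _ _ (Finset.mem_filter.mp hp).2).symm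
  have h1 := Finset.sum_fiberwise_of_maps_to hmap (fun p : V × V => F s(p.2, p.1))
  have h2 : ∑ v : V, ∑ u ∈ Finset.univ.filter (fun u => P v u), F s(u, v)
      = ∑ p ∈ (Finset.univ ×ˢ Finset.univ).filter (fun p : V × V => P p.1 p.2),
          F s(p.2, p.1) := by
    rw [Finset.sum_filter, Finset.sum_product]
    refine Finset.sum_congr rfl fun v _ => ?_
    rw [Finset.sum_filter]
  rw [h2, ← h1]
  refine Finset.sum_congr rfl fun e he => ?_
  rw [Finset.filter_filter]
  rw [Finset.sum_congr rfl (fun p hp => by rw [(Finset.mem_filter.mp hp).2.2] :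
    ∀ p ∈ (Finset.univ ×ˢ Finset.univ).filter
      (fun p : V × V => P p.1 p.2 ∧ s(p.2, p.1) = e), F s(p.2, p.1) = F e)]
  rw [Finset.sum_const, nsmul_eq_mul]

lemma card_fiber_two {V : Type*} [Fintype V] (G : SimpleGraph V) (e : Sym2 V)
    (he : e ∈ G.edgeFinset) :
    (((Finset.univ ×ˢ Finset.univ).filter
      (fun p : V × V => G.Adj p.1 p.2 ∧ s(p.2, p.1) = e)).card : ℝ) = 2 := by
  classical
  induction e using Sym2.ind with
  | _ a b =>
    have hab : G.Adj a b := by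
      rw [SimpleGraph.mem_edgeFinset, SimpleGraph.mem_edgeSet] at he
      exact he
    have hset : (Finset.univ ×ˢ Finset.univ).filter
        (fun p : V × V => G.Adj p.1 p.2 ∧ s(p.2, p.1) = s(a, b)) = {(a, b), (b, a)} := by
      ext ⟨p1, p2⟩
      simp only [Finset.mem_filter, Finset.mem_product, Finset.mem_univ, and_self, true_and,
        Finset.mem_insert, Finset.mem_singleton, Prod.mk.injEq, Sym2.eq_iff]
      constructor
      · rintro ⟨hadj, (⟨h1, h2⟩ | ⟨h1, h2⟩)⟩
        · right; exact ⟨h2, h1⟩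
        · left; exact ⟨h2, h1⟩
      · rintro (⟨h1, h2⟩ | ⟨h1, h2⟩) <;> subst h1 <;> subst h2
        · exact ⟨hab, Or.inr ⟨rfl, rfl⟩⟩
        · exact ⟨hab.symm, Or.inl ⟨rfl, rfl⟩⟩
    rw [hset, Finset.card_pair (by
      intro h
      rw [Prod.mk.injEq] at h
      exact hab.ne h.1)]
    norm_num

lemma card_fiber_one {V : Type*} [Fintype V] (G : SimpleGraph V) (A : V → V → Prop)
    (hA : ∀ u v, G.Adj u v → (A u v ∧ ¬ A v u) ∨ (A v u ∧ ¬ A u v)) (e : Sym2 V)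
    (he : e ∈ G.edgeFinset) :
    (((Finset.univ ×ˢ Finset.univ).filter
      (fun p : V × V => (G.Adj p.1 p.2 ∧ A p.2 p.1) ∧ s(p.2, p.1) = e)).card : ℝ) = 1 := by
  classical
  induction e using Sym2.ind with
  | _ a b =>
    have hab : G.Adj a b := by
      rw [SimpleGraph.mem_edgeFinset, SimpleGraph.mem_edgeSet] at he
      exact he
    rcases hA a b hab with ⟨h1, h2⟩ | ⟨h1, h2⟩
    · have hset : (Finset.univ ×ˢ Finset.univ).filter
          (fun p : V × V => (G.Adj p.1 p.2 ∧ A p.2 p.1) ∧ s(p.2, p.1) = s(a, b))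
          = {(b, a)} := by
        ext ⟨p1, p2⟩
        simp only [Finset.mem_filter, Finset.mem_product, Finset.mem_univ, and_self, true_and,
          Finset.mem_singleton, Prod.mk.injEq, Sym2.eq_iff]
        constructor
        · rintro ⟨⟨hadj, hAp⟩, (⟨e1, e2⟩ | ⟨e1, e2⟩)⟩
          · subst e1; subst e2; exact ⟨rfl, rfl⟩
          · subst e1; subst e2; exact absurd hAp h2
        · rintro ⟨e1, e2⟩
          subst e1; subst e2
          exact ⟨⟨hab.symm, h1⟩, Or.inl ⟨rfl, rfl⟩⟩
      rw [hset, Finset.card_singleton]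
      norm_num
    · have hset : (Finset.univ ×ˢ Finset.univ).filter
          (fun p : V × V => (G.Adj p.1 p.2 ∧ A p.2 p.1) ∧ s(p.2, p.1) = s(a, b))
          = {(a, b)} := by
        ext ⟨p1, p2⟩
        simp only [Finset.mem_filter, Finset.mem_product, Finset.mem_univ, and_self, true_and,
          Finset.mem_singleton, Prod.mk.injEq, Sym2.eq_iff]
        constructor
        · rintro ⟨⟨hadj, hAp⟩, (⟨e1, e2⟩ | ⟨e1, e2⟩)⟩
          · subst e1; subst e2; exact absurd hAp h2
          · subst e1; subst e2; exact ⟨rfl, rfl⟩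
        · rintro ⟨e1, e2⟩
          subst e1; subst e2
          exact ⟨⟨hab, h1⟩, Or.inr ⟨rfl, rfl⟩⟩
      rw [hset, Finset.card_singleton]
      norm_num

/-- Capacitated vertex cover with non-uniform unsplittable demands, approximation bound:
given an `ε`-tight valid level scheme on `G` (with demand-based weights) and a consistent edge
assignment `δ`,
`Σ_{v : δ(v) ≠ ∅} ⌈(Σ_{e ∈ δ(v)} d_e)/k_v⌉·c_v ≤ ε·(2β/(β − 1) + 1)·Σ_{e ∈ E} d_e·μ·β^(−ℓ(e))`. -/
theorem demand_tight_scheme_cost_bound {V : Type*} [Fintype V] (G : SimpleGraph V)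
    (c : V → ℝ) (k : V → ℝ) (d : Sym2 V → ℝ) (β μ ε : ℝ) (ℓ : V → ℕ) (A : V → V → Prop)
    (hc : ∀ v, 0 < c v) (hk : ∀ v, 0 < k v) (hd : ∀ e ∈ G.edgeSet, 0 < d e)
    (hβ : 1 < β) (hμ : ∀ v, c v < μ) (hε : 1 ≤ ε)
    -- `A` assigns each edge to exactly one of its endpoints ...
    (hA : ∀ u v, G.Adj u v → (A u v ∧ ¬ A v u) ∨ (A v u ∧ ¬ A u v))
    -- ... whose level equals the edge level
    (hAlevel : ∀ u v, G.Adj u v → A u v → ℓ v = max (ℓ u) (ℓ v))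
    -- the scheme is valid
    (hvalid : ∀ v, demWeight G d β μ k ℓ v ≤ c v)
    -- and `ε`-tight
    (htight : ∀ v, (Finset.univ.filter (fun u => G.Adj v u ∧ A u v)).Nonempty →
        c v / ε < demWeight G d β μ k ℓ v) :
    ∑ v ∈ Finset.univ.filter (fun v => (Finset.univ.filter (fun u => G.Adj v u ∧ A u v)).Nonempty),
        (⌈assignedDemand G d A v / k v⌉ : ℝ) * c v
      ≤ ε * (2 * β / (β - 1) + 1)
          * ∑ e ∈ G.edgeFinset, d e * (μ * β ^ (-(edgeLevel ℓ e : ℤ))) := by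
  classical
  have hβ0 : (0:ℝ) < β := lt_trans one_pos hβ
  have hβ1 : (0:ℝ) < β - 1 := by linarith
  have hε0 : (0:ℝ) < ε := lt_of_lt_of_le one_pos hε
  cases isEmpty_or_nonempty V with
  | inl hV =>
    have hE : G.edgeFinset = ∅ := Finset.eq_empty_of_isEmpty _
    simp [Finset.univ_eq_empty, hE]
  | inr hV =>
  obtain ⟨v0⟩ := hV
  have hμ0 : (0:ℝ) < μ := lt_trans (hc v0) (hμ v0)
  set F : Sym2 V → ℝ := fun e => d e * (μ * β ^ (-(edgeLevel ℓ e : ℤ))) with hF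
  set T : ℝ := ∑ e ∈ G.edgeFinset, F e with hT
  have hdpos : ∀ v u, G.Adj v u → 0 < d s(u, v) := fun v u h =>
    hd _ (by rw [SimpleGraph.mem_edgeSet]; exact h.symm)
  have hS0 : ∀ v i, 0 ≤ demLevelSum G d ℓ v i := fun v i =>
    Finset.sum_nonneg fun u hu => (hdpos v u (Finset.mem_filter.mp hu).2.1).le
  have hFnn : ∀ e ∈ G.edgeFinset, 0 ≤ F e := by
    intro e he
    have hde : 0 < d e := hd e (SimpleGraph.mem_edgeFinset.mp he)
    have : (0:ℝ) < β ^ (-(edgeLevel ℓ e : ℤ)) := zpow_pos hβ0 _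
    positivity
  have hT0 : 0 ≤ T := Finset.sum_nonneg hFnn
  have hW0 : ∀ v, 0 ≤ demWeight G d β μ k ℓ v := fun v =>
    tsum_nonneg (dW_term_nonneg G d β μ k ℓ v hβ hμ0 (hk v) (hS0 v))
  -- Σ_v W_v ≤ 2T
  have hWsum : ∑ v : V, demWeight G d β μ k ℓ v ≤ 2 * T := by
    have step1 : ∑ v : V, demWeight G d β μ k ℓ v
        ≤ ∑ v : V, ∑ u ∈ Finset.univ.filter (fun u => G.Adj v u), F s(u, v) := by
      refine Finset.sum_le_sum fun v _ => ?_
      have h := demWeight_le_edges G d β μ k ℓ v hβ hμ0 (hk v)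
        (fun u hu => (hdpos v u hu).le)
      refine h.trans (le_of_eq (Finset.sum_congr rfl fun u _ => ?_))
      simp only [hF, edgeLevel, Sym2.lift_mk]
    have step2 := sum_adj_pairs G (fun v u => G.Adj v u) (fun _ _ h => h) F
    rw [step2] at step1
    refine step1.trans (le_of_eq ?_)
    rw [hT, Finset.mul_sum]
    refine Finset.sum_congr rfl fun e he => ?_
    rw [card_fiber_two G e he]
  -- Σ_{v active} D_v μ β^{-ℓ v} = T
  have hDsum : ∑ v : V, assignedDemand G d A v * (μ * β ^ (-(ℓ v : ℤ))) = T := by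
    have step1 : ∀ v : V, assignedDemand G d A v * (μ * β ^ (-(ℓ v : ℤ)))
        = ∑ u ∈ Finset.univ.filter (fun u => G.Adj v u ∧ A u v), F s(u, v) := by
      intro v
      rw [assignedDemand, Finset.sum_mul]
      refine Finset.sum_congr rfl fun u hu => ?_
      obtain ⟨hadj, hAuv⟩ := (Finset.mem_filter.mp hu).2
      have hlev : ℓ v = max (ℓ u) (ℓ v) := hAlevel u v hadj.symm hAuv
      simp only [hF, edgeLevel, Sym2.lift_mk]
      rw [← hlev]
    have hcong : ∑ v : V, assignedDemand G d A v * (μ * β ^ (-(ℓ v : ℤ)))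
        = ∑ v : V, ∑ u ∈ Finset.univ.filter (fun u => G.Adj v u ∧ A u v), F s(u, v) :=
      Finset.sum_congr rfl fun v _ => step1 v
    have hpairs := sum_adj_pairs G (fun v u => G.Adj v u ∧ A u v) (fun _ _ h => h.1) F
    have hmid : ∑ v : V, ∑ u ∈ Finset.univ.filter (fun u => G.Adj v u ∧ A u v), F s(u, v)
        = ∑ e ∈ G.edgeFinset,
            (((Finset.univ ×ˢ Finset.univ).filter
              (fun p : V × V => (G.Adj p.1 p.2 ∧ A p.2 p.1) ∧ s(p.2, p.1) = e)).card : ℝ)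
              * F e := by
      convert hpairs using 3 <;> congr!
    refine (hcong.trans (hmid.trans ?_)).trans hT.symm
    refine Finset.sum_congr rfl fun e he => ?_
    rw [card_fiber_one G A hA e he, one_mul]
  -- per-vertex bound
  set Active := Finset.univ.filter
    (fun v => (Finset.univ.filter (fun u => G.Adj v u ∧ A u v)).Nonempty) with hActive
  have hperv : ∀ v ∈ Active,
      (⌈assignedDemand G d A v / k v⌉ : ℝ) * c v
        ≤ ε * (β / (β - 1)) * (assignedDemand G d A v * (μ * β ^ (-(ℓ v : ℤ))))
          + ε * demWeight G d β μ k ℓ v := by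
    intro v hv
    have hact := (Finset.mem_filter.mp hv).2
    have hcεW : c v < ε * demWeight G d β μ k ℓ v := by
      have := htight v hact
      rw [div_lt_iff₀ hε0] at this
      linarith [this]
    have hD0 : 0 ≤ assignedDemand G d A v :=
      Finset.sum_nonneg fun u hu => (hdpos v u (Finset.mem_filter.mp hu).2.1).le
    have hDk0 : 0 ≤ assignedDemand G d A v / k v := div_nonneg hD0 (hk v).le
    have hceil : (⌈assignedDemand G d A v / k v⌉ : ℝ)
        ≤ assignedDemand G d A v / k v + 1 := (Int.ceil_lt_add_one _).le
    have h1 : (⌈assignedDemand G d A v / k v⌉ : ℝ) * c v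
        ≤ (assignedDemand G d A v / k v) * c v + c v := by
      have := mul_le_mul_of_nonneg_right hceil (hc v).le
      linarith [this]
    have h2 : (assignedDemand G d A v / k v) * c v
        ≤ (assignedDemand G d A v / k v) * (ε * demWeight G d β μ k ℓ v) :=
      mul_le_mul_of_nonneg_left hcεW.le hDk0
    have h3 : (assignedDemand G d A v / k v) * (ε * demWeight G d β μ k ℓ v)
        ≤ (assignedDemand G d A v / k v)
          * (ε * (k v * μ * (β ^ (-(ℓ v : ℤ)) * (β / (β - 1))))) := by
      refine mul_le_mul_of_nonneg_left ?_ hDk0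
      exact mul_le_mul_of_nonneg_left
        (demWeight_le_geom G d β μ k ℓ v hβ hμ0 (hk v) (hS0 v)) hε0.le
    have h4 : (assignedDemand G d A v / k v)
          * (ε * (k v * μ * (β ^ (-(ℓ v : ℤ)) * (β / (β - 1)))))
        = ε * (β / (β - 1)) * (assignedDemand G d A v * (μ * β ^ (-(ℓ v : ℤ)))) := by
      have hkne : k v ≠ 0 := (hk v).ne'
      have hb1 : β - 1 ≠ 0 := hβ1.ne'
      field_simp
    have h5 : c v ≤ ε * demWeight G d β μ k ℓ v := hcεW.le
    calc (⌈assignedDemand G d A v / k v⌉ : ℝ) * c v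
        ≤ (assignedDemand G d A v / k v) * c v + c v := h1
      _ ≤ (assignedDemand G d A v / k v)
            * (ε * (k v * μ * (β ^ (-(ℓ v : ℤ)) * (β / (β - 1))))) + c v := by
          linarith [h2.trans h3]
      _ ≤ ε * (β / (β - 1)) * (assignedDemand G d A v * (μ * β ^ (-(ℓ v : ℤ))))
            + ε * demWeight G d β μ k ℓ v := by rw [h4]; linarith [h5]
  -- sum it up
  have hsum1 : ∑ v ∈ Active, (⌈assignedDemand G d A v / k v⌉ : ℝ) * c v
      ≤ ∑ v ∈ Active, (ε * (β / (β - 1)) * (assignedDemand G d A v * (μ * β ^ (-(ℓ v : ℤ))))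
          + ε * demWeight G d β μ k ℓ v) := Finset.sum_le_sum hperv
  have hDfull : ∑ v ∈ Active, assignedDemand G d A v * (μ * β ^ (-(ℓ v : ℤ))) = T := by
    rw [← hDsum]
    refine Finset.sum_subset (Finset.subset_univ _) fun v _ hv => ?_
    have hne : ¬ (Finset.univ.filter (fun u => G.Adj v u ∧ A u v)).Nonempty := by
      intro hcon
      exact hv (Finset.mem_filter.mpr ⟨Finset.mem_univ _, hcon⟩)
    rw [Finset.not_nonempty_iff_eq_empty] at hne
    rw [assignedDemand, hne, Finset.sum_empty, zero_mul]
  have hWfull : ∑ v ∈ Active, demWeight G d β μ k ℓ v ≤ 2 * T := by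
    refine le_trans (Finset.sum_le_sum_of_subset_of_nonneg (Finset.subset_univ _)
      fun v _ _ => hW0 v) hWsum
  have hq : 1 ≤ β / (β - 1) := by
    rw [le_div_iff₀ hβ1]; linarith
  calc ∑ v ∈ Active, (⌈assignedDemand G d A v / k v⌉ : ℝ) * c v
      ≤ ∑ v ∈ Active, (ε * (β / (β - 1))
            * (assignedDemand G d A v * (μ * β ^ (-(ℓ v : ℤ))))
          + ε * demWeight G d β μ k ℓ v) := hsum1
    _ = ε * (β / (β - 1))
          * (∑ v ∈ Active, assignedDemand G d A v * (μ * β ^ (-(ℓ v : ℤ))))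
        + ε * ∑ v ∈ Active, demWeight G d β μ k ℓ v := by
        rw [Finset.sum_add_distrib, Finset.mul_sum, Finset.mul_sum]
    _ ≤ ε * (β / (β - 1)) * T + ε * (2 * T) := by
        rw [hDfull]
        have h1 : ε * ∑ v ∈ Active, demWeight G d β μ k ℓ v ≤ ε * (2 * T) :=
          mul_le_mul_of_nonneg_left hWfull hε0.le
        linarith
    _ ≤ ε * (2 * β / (β - 1) + 1) * T := by
        have key : ε * (2 * β / (β - 1) + 1) * T
            - (ε * (β / (β - 1)) * T + ε * (2 * T)) = ε * T * (β / (β - 1) - 1) := by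
          ring
        linarith [mul_nonneg (mul_nonneg hε0.le hT0) (sub_nonneg.mpr hq), key]
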